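/- Let g ∈ H'. If f* ∈ H satisfies Φ^sur(f*; f*) ≤ Φ^sur(f; f*) for all f ∈ H (i.e. f* is a minimizer of the surrogate functional anchored at f* itself; equivalently, f* is a fixed point of the map T(f) = S_{W,P}(f + K*(g − Kf))), then f* is a minimizer of Φ: Φ(f*) ≤ Φ(f) for all f ∈ H. -/

import Mathlib

open scoped RealInnerProductSpace ENNReal

/-- If `f*` minimizes the surrogate functional anchored at `f*` itself, then `f*` is a
minimizer of `Φ`. -/
theorem stmt_8
    {H H' : Type*} [NormedAddCommGroup H] [InnerProductSpace ℝ H] [CompleteSpace H]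
    [NormedAddCommGroup H'] [InnerProductSpace ℝ H'] [CompleteSpace H']
    {Γ : Type*} [Countable Γ]
    (e : HilbertBasis Γ ℝ H)
    (K : H →L[ℝ] H') (hK : ‖K‖ < 1)
    (w : Γ → ℝ) (c : ℝ) (hc : 0 < c) (hw : ∀ γ, c ≤ w γ)
    (p : Γ → ℝ) (hp : ∀ γ, 1 ≤ p γ ∧ p γ ≤ 2)
    (g : H')
    (Φ : H → ℝ≥0∞)
    (hΦ : ∀ f, Φ f = ENNReal.ofReal (‖K f - g‖ ^ 2) +
      ∑' γ, ENNReal.ofReal (w γ * |⟪f, e γ⟫| ^ (p γ)))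
    (Φsur : H → H → ℝ≥0∞)
    (hΦsur : ∀ f a', Φsur f a' = Φ f + ENNReal.ofReal (‖f - a'‖ ^ 2 - ‖K (f - a')‖ ^ 2))
    (fstar : H)
    (hfix : ∀ f : H, Φsur fstar fstar ≤ Φsur f fstar) :
    ∀ f : H, Φ fstar ≤ Φ f := by
  intro f
  by_cases hfin : Φ f = ⊤
  · simp [hfin]
  -- `Φsur fstar fstar = Φ fstar`
  have hsf : Φsur fstar fstar = Φ fstar := by
    rw [hΦsur]; simp
  -- `Φ 0` is finite
  have hΦ0 : Φ (0 : H) ≠ ⊤ := by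
    rw [hΦ]
    have : ∀ γ : Γ, ENNReal.ofReal (w γ * |⟪(0 : H), e γ⟫| ^ (p γ)) = 0 := by
      intro γ
      have hpγ : p γ ≠ 0 := by have := (hp γ).1; linarith
      simp [Real.zero_rpow hpγ]
    rw [tsum_congr this]
    simp
  -- `Φ fstar` is finite
  have hfsfin : Φ fstar ≠ ⊤ := by
    have h0 := hfix 0
    rw [hsf, hΦsur] at h0
    exact ne_top_of_le_ne_top (by
      exact ENNReal.add_ne_top.2 ⟨hΦ0, ENNReal.ofReal_ne_top⟩) h0
  -- convexity of `Φ` along the segment from `fstar` to `f`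
  have hconv : ∀ t : ℝ, 0 ≤ t → t ≤ 1 →
      Φ (fstar + t • (f - fstar)) ≤
        ENNReal.ofReal (1 - t) * Φ fstar + ENNReal.ofReal t * Φ f := by
    intro t ht0 ht1
    have ht1' : 0 ≤ 1 - t := by linarith
    set ft := fstar + t • (f - fstar) with hft
    rw [hΦ ft, hΦ fstar, hΦ f]
    have hterm1 : ENNReal.ofReal (‖K ft - g‖ ^ 2) ≤
        ENNReal.ofReal (1 - t) * ENNReal.ofReal (‖K fstar - g‖ ^ 2) +
        ENNReal.ofReal t * ENNReal.ofReal (‖K f - g‖ ^ 2) := by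
      have hdecomp : K ft - g = (1 - t) • (K fstar - g) + t • (K f - g) := by
        simp only [hft, map_add, map_smul, map_sub]
        module
      have hnorm : ‖K ft - g‖ ≤ (1 - t) * ‖K fstar - g‖ + t * ‖K f - g‖ := by
        rw [hdecomp]
        refine (norm_add_le _ _).trans ?_
        rw [norm_smul, norm_smul, Real.norm_eq_abs, Real.norm_eq_abs,
          abs_of_nonneg ht1', abs_of_nonneg ht0]
      have hsq : ‖K ft - g‖ ^ 2 ≤ (1 - t) * ‖K fstar - g‖ ^ 2 + t * ‖K f - g‖ ^ 2 := by
        have h1 : ‖K ft - g‖ ^ 2 ≤ ((1 - t) * ‖K fstar - g‖ + t * ‖K f - g‖) ^ 2 :=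
          pow_le_pow_left₀ (norm_nonneg _) hnorm 2
        nlinarith [mul_nonneg (mul_nonneg ht0 ht1')
          (sq_nonneg (‖K fstar - g‖ - ‖K f - g‖))]
      calc ENNReal.ofReal (‖K ft - g‖ ^ 2) ≤
          ENNReal.ofReal ((1 - t) * ‖K fstar - g‖ ^ 2 + t * ‖K f - g‖ ^ 2) :=
            ENNReal.ofReal_le_ofReal hsq
        _ = ENNReal.ofReal (1 - t) * ENNReal.ofReal (‖K fstar - g‖ ^ 2) +
            ENNReal.ofReal t * ENNReal.ofReal (‖K f - g‖ ^ 2) := by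
            rw [ENNReal.ofReal_add (by positivity) (by positivity),
              ENNReal.ofReal_mul ht1', ENNReal.ofReal_mul ht0]
    have hterm2 : (∑' γ, ENNReal.ofReal (w γ * |⟪ft, e γ⟫| ^ (p γ))) ≤
        ENNReal.ofReal (1 - t) * (∑' γ, ENNReal.ofReal (w γ * |⟪fstar, e γ⟫| ^ (p γ))) +
        ENNReal.ofReal t * (∑' γ, ENNReal.ofReal (w γ * |⟪f, e γ⟫| ^ (p γ))) := by
      rw [← ENNReal.tsum_mul_left, ← ENNReal.tsum_mul_left, ← ENNReal.tsum_add]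
      refine ENNReal.tsum_le_tsum fun γ => ?_
      have hwγ : (0 : ℝ) ≤ w γ := le_trans hc.le (hw γ)
      set a := |⟪fstar, e γ⟫| with ha
      set b := |⟪f, e γ⟫| with hb
      have ha0 : 0 ≤ a := abs_nonneg _
      have hb0 : 0 ≤ b := abs_nonneg _
      have hinner : ⟪ft, e γ⟫ = (1 - t) * ⟪fstar, e γ⟫ + t * ⟪f, e γ⟫ := by
        simp only [hft, inner_add_left, inner_sub_left, real_inner_smul_left]
        ring
      have habs : |⟪ft, e γ⟫| ≤ (1 - t) * a + t * b := by
        rw [hinner]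
        refine (abs_add_le _ _).trans ?_
        rw [abs_mul, abs_mul, abs_of_nonneg ht1', abs_of_nonneg ht0]
      have hmono : |⟪ft, e γ⟫| ^ (p γ) ≤ ((1 - t) * a + t * b) ^ (p γ) :=
        Real.rpow_le_rpow (abs_nonneg _) habs (by linarith [(hp γ).1])
      have hcvx : ((1 - t) * a + t * b) ^ (p γ) ≤ (1 - t) * a ^ (p γ) + t * b ^ (p γ) := by
        have := (convexOn_rpow (hp γ).1).2 (Set.mem_Ici.2 ha0) (Set.mem_Ici.2 hb0)
          ht1' ht0 (by ring)
        simpa [smul_eq_mul] using this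
      have hreal : w γ * |⟪ft, e γ⟫| ^ (p γ) ≤
          (1 - t) * (w γ * a ^ (p γ)) + t * (w γ * b ^ (p γ)) := by
        have := mul_le_mul_of_nonneg_left (hmono.trans hcvx) hwγ
        nlinarith [this]
      calc ENNReal.ofReal (w γ * |⟪ft, e γ⟫| ^ (p γ)) ≤
          ENNReal.ofReal ((1 - t) * (w γ * a ^ (p γ)) + t * (w γ * b ^ (p γ))) :=
            ENNReal.ofReal_le_ofReal hreal
        _ = ENNReal.ofReal (1 - t) * ENNReal.ofReal (w γ * a ^ (p γ)) +
            ENNReal.ofReal t * ENNReal.ofReal (w γ * b ^ (p γ)) := by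
            rw [ENNReal.ofReal_add (by positivity) (by positivity),
              ENNReal.ofReal_mul ht1', ENNReal.ofReal_mul ht0]
    calc ENNReal.ofReal (‖K ft - g‖ ^ 2) + ∑' γ, ENNReal.ofReal (w γ * |⟪ft, e γ⟫| ^ (p γ))
        ≤ (ENNReal.ofReal (1 - t) * ENNReal.ofReal (‖K fstar - g‖ ^ 2) +
            ENNReal.ofReal t * ENNReal.ofReal (‖K f - g‖ ^ 2)) +
          (ENNReal.ofReal (1 - t) * (∑' γ, ENNReal.ofReal (w γ * |⟪fstar, e γ⟫| ^ (p γ))) +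
            ENNReal.ofReal t * (∑' γ, ENNReal.ofReal (w γ * |⟪f, e γ⟫| ^ (p γ)))) :=
          add_le_add hterm1 hterm2
      _ = _ := by ring
  set A := (Φ fstar).toReal with hA
  set B := (Φ f).toReal with hB
  set D := ‖f - fstar‖ ^ 2 with hD
  have hD0 : 0 ≤ D := by positivity
  have hKle : ‖K (f - fstar)‖ ^ 2 ≤ D := by
    have h1 : ‖K (f - fstar)‖ ≤ ‖K‖ * ‖f - fstar‖ := K.le_opNorm _
    have h2 : ‖K‖ * ‖f - fstar‖ ≤ ‖f - fstar‖ := by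
      nlinarith [norm_nonneg (f - fstar), K.opNorm_nonneg]
    have := h1.trans h2
    nlinarith [norm_nonneg (K (f - fstar))]
  -- key inequality: `A ≤ B + t * D` for all `t ∈ (0, 1]`
  have key : ∀ t : ℝ, 0 < t → t ≤ 1 → A ≤ B + t * D := by
    intro t ht0 ht1
    have ht1' : 0 ≤ 1 - t := by linarith
    set ft := fstar + t • (f - fstar) with hft
    have hmain := hfix ft
    rw [hsf, hΦsur] at hmain
    have hftdiff : ft - fstar = t • (f - fstar) := by rw [hft]; abel
    have hnorms : ‖ft - fstar‖ ^ 2 - ‖K (ft - fstar)‖ ^ 2 =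
        t ^ 2 * (D - ‖K (f - fstar)‖ ^ 2) := by
      rw [hftdiff, map_smul, norm_smul, norm_smul, Real.norm_eq_abs, abs_of_pos ht0, hD]
      ring
    rw [hnorms] at hmain
    have hchain : Φ fstar ≤ ENNReal.ofReal (1 - t) * Φ fstar + ENNReal.ofReal t * Φ f +
        ENNReal.ofReal (t ^ 2 * (D - ‖K (f - fstar)‖ ^ 2)) :=
      hmain.trans (add_le_add_left (hconv t ht0.le ht1) _)
    have hrhs_fin : ENNReal.ofReal (1 - t) * Φ fstar + ENNReal.ofReal t * Φ f +
        ENNReal.ofReal (t ^ 2 * (D - ‖K (f - fstar)‖ ^ 2)) ≠ ⊤ := by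
      refine ENNReal.add_ne_top.2 ⟨ENNReal.add_ne_top.2 ⟨?_, ?_⟩, ENNReal.ofReal_ne_top⟩
      · exact ENNReal.mul_ne_top ENNReal.ofReal_ne_top hfsfin
      · exact ENNReal.mul_ne_top ENNReal.ofReal_ne_top hfin
    have htr := ENNReal.toReal_le_toReal hfsfin hrhs_fin |>.2 hchain
    rw [ENNReal.toReal_add (ENNReal.add_ne_top.2
        ⟨ENNReal.mul_ne_top ENNReal.ofReal_ne_top hfsfin,
         ENNReal.mul_ne_top ENNReal.ofReal_ne_top hfin⟩) ENNReal.ofReal_ne_top,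
      ENNReal.toReal_add (ENNReal.mul_ne_top ENNReal.ofReal_ne_top hfsfin)
        (ENNReal.mul_ne_top ENNReal.ofReal_ne_top hfin),
      ENNReal.toReal_mul, ENNReal.toReal_mul,
      ENNReal.toReal_ofReal ht1', ENNReal.toReal_ofReal ht0.le,
      ENNReal.toReal_ofReal (by nlinarith : (0:ℝ) ≤ t ^ 2 * (D - ‖K (f - fstar)‖ ^ 2))]
      at htr
    -- htr : A ≤ (1 - t) * A + t * B + t ^ 2 * (D - ‖K (f - fstar)‖ ^ 2)
    have hKnn : 0 ≤ ‖K (f - fstar)‖ ^ 2 := by positivity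
    nlinarith [htr]
  -- conclude `A ≤ B`
  have hAB : A ≤ B := by
    by_contra hlt
    push_neg at hlt
    set t := min 1 ((A - B) / (2 * D + 1)) with hts
    have hABpos : 0 < A - B := by linarith
    have hden : 0 < 2 * D + 1 := by linarith
    have ht0 : 0 < t := lt_min one_pos (div_pos hABpos hden)
    have ht1 : t ≤ 1 := min_le_left _ _
    have h1 := key t ht0 ht1
    have h2 : t * D ≤ (A - B) / (2 * D + 1) * D :=
      mul_le_mul_of_nonneg_right (min_le_right _ _) hD0
    have h3 : (A - B) / (2 * D + 1) * D < A - B := by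
      rw [div_mul_eq_mul_div, div_lt_iff₀ hden]
      nlinarith
    linarith
  exact (ENNReal.toReal_le_toReal hfsfin hfin).1 hAB
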